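/- For every n ≥ 1 and every real R > 1, setting r := ⌈log₂ R⌉, every strictly increasing sequence of real numbers of length at least 4^(r·(n−1)+1) has an n-term subsequence b = (b₁,…,bₙ) such that either b_k − b_i ≥ R·(b_j − b_i) for all 1 ≤ i < j < k ≤ n, or the sequence c := (−bₙ, −b_{n−1}, …, −b₁) satisfies c_k − c_i ≥ R·(c_j − c_i) for all 1 ≤ i < j < k ≤ n. -/

import Mathlib

open Finset

/-- An "anchored A-chain" of length `m+1` inside a finite set `S`:
increasing points whose distances to the first point grow by factor `R` each step. -/
def AchN (R : ℝ) (S : Finset ℝ) (m : ℕ) : Prop :=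
  ∃ g : ℕ → ℝ, (∀ k, k ≤ m → g k ∈ S) ∧ (∀ j, j < m → g j < g (j + 1)) ∧
    (∀ j, j + 1 ≤ m → R * (g j - g 0) ≤ g (j + 1) - g 0)

lemma chain_mono {g : ℕ → ℝ} {m : ℕ} (h : ∀ j, j < m → g j < g (j + 1)) :
    ∀ i j, i < j → j ≤ m → g i < g j := by
  intro i j hij hjm
  induction j with
  | zero => omega
  | succ k ih =>
    rcases Nat.lt_succ_iff_lt_or_eq.mp hij with h' | h'
    · exact lt_trans (ih h' (by omega)) (h k (by omega))
    · subst h'; exact h i (by omega)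

lemma achN_mono {R : ℝ} {S T : Finset ℝ} (hST : S ⊆ T) {m : ℕ}
    (h : AchN R S m) : AchN R T m := by
  obtain ⟨g, h1, h2, h3⟩ := h
  exact ⟨g, fun k hk => hST (h1 k hk), h2, h3⟩

lemma achN_zero {R : ℝ} {S : Finset ℝ} (h : S.Nonempty) : AchN R S 0 := by
  obtain ⟨x, hx⟩ := h
  exact ⟨fun _ => x, fun k _ => hx, fun j hj => by omega, fun j hj => by omega⟩

lemma achN_trunc {R : ℝ} {S : Finset ℝ} {m k : ℕ} (hk : k ≤ m) (h : AchN R S m) :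
    AchN R S k := by
  obtain ⟨g, h1, h2, h3⟩ := h
  exact ⟨g, fun j hj => h1 j (le_trans hj hk), fun j hj => h2 j (by omega),
    fun j hj => h3 j (by omega)⟩

lemma achN_extend {R : ℝ} {S' S : Finset ℝ} {m : ℕ} (hS' : S' ⊆ S) {e : ℝ} (he : e ∈ S)
    (h1 : ∀ y ∈ S', y < e) (h2 : ∀ y ∈ S', ∀ z ∈ S', (R - 1) * (z - y) ≤ e - z)
    (h : AchN R S' m) : AchN R S (m + 1) := by
  obtain ⟨g, hg1, hg2, hg3⟩ := h
  refine ⟨fun k => if k ≤ m then g k else e, ?_, ?_, ?_⟩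
  · intro k hk
    by_cases hkm : k ≤ m
    · simp only [hkm, if_pos]; exact hS' (hg1 k hkm)
    · simp only [hkm, if_neg, if_false]; exact he
  · intro j hj
    by_cases hjm : j < m
    · have hj1 : j ≤ m := by omega
      have hj2 : j + 1 ≤ m := by omega
      simp only [hj1, hj2, if_pos]
      exact hg2 j hjm
    · have hjeq : j = m := by omega
      subst hjeq
      have hj2 : ¬ (j + 1 ≤ j) := by omega
      simp only [le_refl, if_pos, hj2, if_neg, if_false]
      exact h1 _ (hg1 j le_rfl)
  · intro j hj
    have h0 : (0 : ℕ) ≤ m := by omega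
    by_cases hjm : j + 1 ≤ m
    · have hj1 : j ≤ m := by omega
      simp only [hj1, hjm, h0, if_pos]
      exact hg3 j hjm
    · have hjeq : j = m := by omega
      subst hjeq
      have hj2 : ¬ (j + 1 ≤ j) := by omega
      simp only [le_refl, if_pos, hj2, if_neg, if_false, h0]
      have := h2 (g 0) (hg1 0 (by omega)) (g j) (hg1 j le_rfl)
      linarith

/-- Pigeonhole into `ℓ` strips of equal width. -/
lemma stripLemma {ℓ : ℕ} (hℓ : 2 ≤ ℓ) (S : Finset ℝ) (c : ℕ) (hcard : ℓ ^ (c + 1) ≤ S.card)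
    (hne : S.Nonempty) (hlt : S.min' hne < S.max' hne) :
    ∃ (i : ℕ) (S' : Finset ℝ), i < ℓ ∧ S' ⊆ S ∧ ℓ ^ c ≤ S'.card ∧
      (∀ x ∈ S', S.min' hne + (i : ℝ) * ((S.max' hne - S.min' hne) / ℓ) ≤ x) ∧
      (∀ x ∈ S', x ≤ S.min' hne + ((i : ℝ) + 1) * ((S.max' hne - S.min' hne) / ℓ)) := by
  classical
  set α := S.min' hne with hα
  set β := S.max' hne with hβ
  have hw : (0 : ℝ) < β - α := by linarith
  have hℓ0 : (0 : ℝ) < (ℓ : ℝ) := by positivity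
  set u : ℝ := (β - α) / ℓ with hu_def
  have hu : 0 < u := by positivity
  set f : ℝ → ℕ := fun x => min ⌊(x - α) / u⌋₊ (ℓ - 1) with hf
  have hmaps : ∀ x ∈ S, f x ∈ Finset.range ℓ := by
    intro x _
    exact mem_range.mpr (lt_of_le_of_lt (min_le_right _ _) (by omega))
  obtain ⟨i, hi, hfib⟩ := Finset.exists_le_card_fiber_of_mul_le_card_of_maps_to hmaps
    ⟨0, mem_range.mpr (by omega)⟩
    (by rw [card_range]; calc ℓ * ℓ ^ c = ℓ ^ (c + 1) := by ring
                             _ ≤ S.card := hcard)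
  refine ⟨i, S.filter (fun x => f x = i), mem_range.mp hi, filter_subset _ _, hfib, ?_, ?_⟩
  · intro x hx
    obtain ⟨hxS, hfx⟩ := mem_filter.mp hx
    have hxα : α ≤ x := S.min'_le x hxS
    have h1 : i ≤ ⌊(x - α) / u⌋₊ := by
      have : min ⌊(x - α) / u⌋₊ (ℓ - 1) = i := hfx
      omega
    have h2 : (i : ℝ) ≤ (x - α) / u := by
      refine le_trans ?_ (Nat.floor_le (div_nonneg (by linarith) hu.le))
      exact_mod_cast h1
    have := (le_div_iff₀ hu).mp h2
    linarith
  · intro x hx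
    obtain ⟨hxS, hfx⟩ := mem_filter.mp hx
    by_cases hcase : ⌊(x - α) / u⌋₊ ≤ ℓ - 1
    · have hieq : i = ⌊(x - α) / u⌋₊ := by
        have : min ⌊(x - α) / u⌋₊ (ℓ - 1) = i := hfx
        omega
      have h3 : (x - α) / u < (i : ℝ) + 1 := by
        rw [hieq]
        exact_mod_cast Nat.lt_floor_add_one ((x - α) / u)
      have := (div_lt_iff₀ hu).mp h3
      linarith
    · have hieq : i = ℓ - 1 := by
        have : min ⌊(x - α) / u⌋₊ (ℓ - 1) = i := hfx
        omega
      have hxβ : x ≤ β := S.le_max' x hxS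
      have hcast : ((i : ℝ) + 1) = (ℓ : ℝ) := by
        rw [hieq]
        have : ((ℓ - 1 : ℕ) : ℝ) = (ℓ : ℝ) - 1 := by
          have : (1 : ℕ) ≤ ℓ := by omega
          push_cast [Nat.cast_sub this]
          ring
        rw [this]; ring
      rw [hcast]
      have : (ℓ : ℝ) * u = β - α := by
        rw [hu_def]; field_simp
      linarith

set_option maxHeartbeats 2000000 in
/-- Main combinatorial lemma: a set of size `ℓ^d` contains an A-chain of length `p+1`
and a reversed (negated) A-chain of length `q+1` with `p + q = d`. -/
lemma mainLemma (R : ℝ) (hR1 : 1 ≤ R) (ℓ : ℕ) (hℓ : 2 ≤ ℓ) (hRℓ : R ≤ (ℓ : ℝ)) :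
    ∀ d (S : Finset ℝ), ℓ ^ d ≤ S.card →
      ∃ p q : ℕ, p + q = d ∧ AchN R S p ∧ AchN R (S.image (fun x => -x)) q := by
  intro d
  induction d using Nat.strong_induction_on with
  | _ d ih =>
  intro S hS
  match d with
  | 0 =>
    have hne : S.Nonempty := by
      rw [← Finset.card_pos]
      calc 1 = ℓ ^ 0 := by ring
        _ ≤ S.card := hS
    exact ⟨0, 0, rfl, achN_zero hne, achN_zero (hne.image _)⟩
  | 1 =>
    have h2 : 1 < S.card := by
      calc 1 < ℓ := by omega
        _ = ℓ ^ 1 := by ring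
        _ ≤ S.card := hS
    obtain ⟨x, hx, y, hy, hxy⟩ := Finset.one_lt_card.mp h2
    rcases lt_or_gt_of_ne hxy with hlt | hlt
    · refine ⟨1, 0, rfl, ⟨fun k => if k = 0 then x else y, ?_, ?_, ?_⟩,
        achN_zero (Finset.Nonempty.image ⟨x, hx⟩ _)⟩
      · intro k hk
        by_cases h : k = 0 <;> simp [h, hx, hy]
      · intro j hj
        have : j = 0 := by omega
        simp [this, hlt]
      · intro j hj
        have : j = 0 := by omega
        simp [this]; linarith
    · refine ⟨1, 0, rfl, ⟨fun k => if k = 0 then y else x, ?_, ?_, ?_⟩,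
        achN_zero (Finset.Nonempty.image ⟨x, hx⟩ _)⟩
      · intro k hk
        by_cases h : k = 0 <;> simp [h, hx, hy]
      · intro j hj
        have : j = 0 := by omega
        simp [this, hlt]
      · intro j hj
        have : j = 0 := by omega
        simp [this]; linarith
  | (d + 2) =>
    classical
    have hne : S.Nonempty := by
      rw [← Finset.card_pos]
      calc 1 ≤ ℓ ^ (d + 2) := Nat.one_le_pow _ _ (by omega)
        _ ≤ S.card := hS
    have hcard2 : 1 < S.card := by
      calc 1 < ℓ := by omega
        _ ≤ ℓ ^ (d + 2) := Nat.le_self_pow (by omega) _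
        _ ≤ S.card := hS
    have hlt : S.min' hne < S.max' hne := Finset.min'_lt_max'_of_card S hcard2
    set α := S.min' hne with hα
    set β := S.max' hne with hβ
    have hℓ0 : (0 : ℝ) < (ℓ : ℝ) := by positivity
    set u : ℝ := (β - α) / ℓ with hu_def
    have hu : 0 < u := by
      have : (0:ℝ) < β - α := by linarith
      positivity
    have hβα : β = α + (ℓ : ℝ) * u := by rw [hu_def]; field_simp; ring
    obtain ⟨i, S', hiℓ, hsub, hcard', hlow, hupp⟩ := stripLemma hℓ S (d + 1) hS hne hlt
    rw [← hα, ← hβ, ← hu_def] at hlow hupp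
    have hβmem : β ∈ S := S.max'_mem hne
    have hαmem : (-α) ∈ S.image (fun x => -x) :=
      Finset.mem_image.mpr ⟨α, S.min'_mem hne, rfl⟩
    by_cases hi0 : i = 0
    · -- first strip: extend the A-chain by β
      subst hi0
      obtain ⟨p, q, hpq, hA, hB⟩ := ih (d + 1) (by omega) S' hcard'
      refine ⟨p + 1, q, by omega, ?_, achN_mono (Finset.image_subset_image hsub) hB⟩
      refine achN_extend hsub hβmem ?_ ?_ hA
      · intro y hy
        have := hupp y hy
        simp only [Nat.cast_zero] at this
        have h2ℓ : (2:ℝ) ≤ (ℓ:ℝ) := by exact_mod_cast hℓ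
        nlinarith
      · intro y hy z hz
        have hy1 := hlow y hy
        have hz1 := hupp z hz
        simp only [Nat.cast_zero] at hy1 hz1
        have hzy : z - y ≤ u := by linarith
        have hRu : (R - 1) * (z - y) ≤ (R - 1) * u :=
          mul_le_mul_of_nonneg_left hzy (by linarith)
        have hRu2 : (R - 1) * u ≤ ((ℓ:ℝ) - 1) * u :=
          mul_le_mul_of_nonneg_right (by linarith) hu.le
        have : β - z ≥ ((ℓ:ℝ) - 1) * u := by
          rw [hβα]; linarith [hβα]
        linarith
    · by_cases hiℓ1 : i = ℓ - 1
      · -- last strip: extend the B-chain by -α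
        obtain ⟨p, q, hpq, hA, hB⟩ := ih (d + 1) (by omega) S' hcard'
        have hcastℓ : ((i : ℝ)) = (ℓ : ℝ) - 1 := by
          rw [hiℓ1]
          have h1 : (1 : ℕ) ≤ ℓ := by omega
          push_cast [Nat.cast_sub h1]
          ring
        refine ⟨p, q + 1, by omega, achN_mono hsub hA, ?_⟩
        refine achN_extend (Finset.image_subset_image hsub) hαmem ?_ ?_ hB
        · intro y hy
          obtain ⟨x, hxS', rfl⟩ := Finset.mem_image.mp hy
          have := hlow x hxS'
          rw [hcastℓ] at this
          have h2ℓ : (2:ℝ) ≤ (ℓ:ℝ) := by exact_mod_cast hℓ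
          have : α + u ≤ x := by nlinarith
          linarith
        · intro y hy z hz
          obtain ⟨y0, hy0, rfl⟩ := Finset.mem_image.mp hy
          obtain ⟨z0, hz0, rfl⟩ := Finset.mem_image.mp hz
          have hy1 := hupp y0 hy0
          have hz1 := hlow z0 hz0
          rw [hcastℓ] at hy1 hz1
          have hzy : y0 - z0 ≤ u := by linarith
          have hRu : (R - 1) * (-z0 - (-y0)) ≤ (R - 1) * u := by
            have : -z0 - (-y0) = y0 - z0 := by ring
            rw [this]
            exact mul_le_mul_of_nonneg_left hzy (by linarith)
          have hRu2 : (R - 1) * u ≤ ((ℓ:ℝ) - 1) * u :=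
            mul_le_mul_of_nonneg_right (by linarith) hu.le
          have : -α - (-z0) = z0 - α := by ring
          rw [this]
          linarith
      · -- internal strip: second pigeonhole, extend both chains
        have hi1 : 1 ≤ i := by omega
        have hi2 : i ≤ ℓ - 2 := by omega
        have hne' : S'.Nonempty := by
          rw [← Finset.card_pos]
          calc 1 ≤ ℓ ^ (d + 1) := Nat.one_le_pow _ _ (by omega)
            _ ≤ S'.card := hcard'
        have hcard2' : 1 < S'.card := by
          calc 1 < ℓ := by omega
            _ ≤ ℓ ^ (d + 1) := Nat.le_self_pow (by omega) _
            _ ≤ S'.card := hcard'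
        have hlt' : S'.min' hne' < S'.max' hne' := Finset.min'_lt_max'_of_card S' hcard2'
        obtain ⟨i', S'', hi'ℓ, hsub', hcard'', hlow', hupp'⟩ :=
          stripLemma hℓ S' d hcard' hne' hlt'
        set α' := S'.min' hne' with hα'
        set β' := S'.max' hne' with hβ'
        set u' : ℝ := (β' - α') / ℓ with hu'_def
        -- spread of S' is at most u, so u' ≤ u / ℓ
        have hα'bds : α + (i:ℝ) * u ≤ α' ∧ α' ≤ α + ((i:ℝ) + 1) * u :=
          ⟨hlow α' (S'.min'_mem hne'), hupp α' (S'.min'_mem hne')⟩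
        have hβ'bds : α + (i:ℝ) * u ≤ β' ∧ β' ≤ α + ((i:ℝ) + 1) * u :=
          ⟨hlow β' (S'.max'_mem hne'), hupp β' (S'.max'_mem hne')⟩
        have hu'u : u' ≤ u / ℓ := by
          have hba : β' - α' ≤ u := by linarith [hα'bds.1, hβ'bds.2]
          rw [hu'_def]
          gcongr
        have hspread : ∀ y ∈ S'', ∀ z ∈ S'', z - y ≤ u / ℓ := by
          intro y hy z hz
          have h1 := hlow' y hy
          have h2 := hupp' z hz
          have : z - y ≤ u' := by rw [hu'_def]; linarith
          linarith
        have hposbds : ∀ x ∈ S'', α + (i:ℝ) * u ≤ x ∧ x ≤ α + ((i:ℝ) + 1) * u :=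
          fun x hx => ⟨hlow x (hsub' hx), hupp x (hsub' hx)⟩
        obtain ⟨p, q, hpq, hA, hB⟩ := ih d (by omega) S'' hcard''
        have hcasti : (1:ℝ) ≤ (i:ℝ) := by exact_mod_cast hi1
        have hcasti2 : (i:ℝ) + 1 ≤ (ℓ:ℝ) - 1 := by
          have : i + 2 ≤ ℓ := by omega
          have := (Nat.cast_le (α := ℝ)).mpr this
          push_cast at this
          linarith
        have hsubS : S'' ⊆ S := fun x hx => hsub (hsub' hx)
        refine ⟨p + 1, q + 1, by omega, ?_, ?_⟩
        · refine achN_extend hsubS hβmem ?_ ?_ hA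
          · intro y hy
            have := (hposbds y hy).2
            have : y ≤ α + ((ℓ:ℝ) - 1) * u := by nlinarith
            rw [hβα]
            nlinarith
          · intro y hy z hz
            have hzy := hspread y hy z hz
            have hz2 := (hposbds z hz).2
            have hgap : β - z ≥ u := by
              rw [hβα]; nlinarith
            have hRu : (R - 1) * (z - y) ≤ (R - 1) * (u / ℓ) :=
              mul_le_mul_of_nonneg_left hzy (by linarith)
            have hRu2 : (R - 1) * (u / ℓ) ≤ ((ℓ:ℝ) - 1) * (u / ℓ) :=
              mul_le_mul_of_nonneg_right (by linarith) (by positivity)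
            have hfin : ((ℓ:ℝ) - 1) * (u / ℓ) ≤ u := by
              have hℓne : (ℓ:ℝ) ≠ 0 := ne_of_gt hℓ0
              have hee : ((ℓ:ℝ) - 1) * (u / ℓ) = u - u / ℓ := by
                field_simp
              have hpos : 0 < u / ℓ := div_pos hu hℓ0
              linarith
            linarith
        · refine achN_extend (Finset.image_subset_image hsubS) hαmem ?_ ?_ hB
          · intro y hy
            obtain ⟨x, hxS'', rfl⟩ := Finset.mem_image.mp hy
            have := (hposbds x hxS'').1
            have : α + u ≤ x := by nlinarith
            linarith
          · intro y hy z hz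
            obtain ⟨y0, hy0, rfl⟩ := Finset.mem_image.mp hy
            obtain ⟨z0, hz0, rfl⟩ := Finset.mem_image.mp hz
            have hzy := hspread z0 hz0 y0 hy0
            have hz2 := (hposbds z0 hz0).1
            have hgap : -α - (-z0) ≥ u := by nlinarith
            have hRu : (R - 1) * (-z0 - (-y0)) ≤ (R - 1) * (u / ℓ) := by
              have heq : -z0 - (-y0) = y0 - z0 := by ring
              rw [heq]
              exact mul_le_mul_of_nonneg_left hzy (by linarith)
            have hRu2 : (R - 1) * (u / ℓ) ≤ ((ℓ:ℝ) - 1) * (u / ℓ) :=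
              mul_le_mul_of_nonneg_right (by linarith) (by positivity)
            have hfin : ((ℓ:ℝ) - 1) * (u / ℓ) ≤ u := by
              have hℓne : (ℓ:ℝ) ≠ 0 := ne_of_gt hℓ0
              have hee : ((ℓ:ℝ) - 1) * (u / ℓ) = u - u / ℓ := by
                field_simp
              have hpos : 0 < u / ℓ := div_pos hu hℓ0
              linarith
            linarith

/-- From the anchored chain condition, the full "spreading" condition follows. -/
lemma suffLemma {R : ℝ} (hR : 1 ≤ R) {m : ℕ} {g : ℕ → ℝ}
    (hmono : ∀ j, j < m → g j < g (j + 1))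
    (hc : ∀ j, j + 1 ≤ m → R * (g j - g 0) ≤ g (j + 1) - g 0) :
    ∀ i j l : ℕ, i < j → j < l → l ≤ m → R * (g j - g i) ≤ g l - g i := by
  intro i j l hij hjl hlm
  have h1 := hc j (by omega)
  have h2 : g (j + 1) ≤ g l := by
    rcases Nat.lt_or_ge (j + 1) l with h | h
    · exact (chain_mono hmono (j + 1) l h hlm).le
    · have : j + 1 = l := by omega
      rw [this]
  have h3 : g 0 ≤ g i := by
    rcases Nat.eq_zero_or_pos i with h | h
    · rw [h]
    · exact (chain_mono hmono 0 i h (by omega)).le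
  nlinarith

set_option maxHeartbeats 1000000 in
/-- for `n ≥ 1`, `R > 1`, and `r := ⌈log₂ R⌉`, every strictly increasing
real sequence of length at least `4^(r·(n−1)+1)` has an `n`-term subsequence `b` such
that `b_k − b_i ≥ R·(b_j − b_i)` for all `i < j < k`, or the reversed negated sequence
`c := (−bₙ,…,−b₁)` satisfies the same condition. -/
theorem stmt11 (n : ℕ) (hn : 1 ≤ n) (R : ℝ) (hR : 1 < R) (N : ℕ)
    (hN : 4 ^ ((⌈Real.logb 2 R⌉.toNat) * (n - 1) + 1) ≤ N)
    (a : Fin N → ℝ) (ha : StrictMono a) :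
    ∃ φ : Fin n → Fin N, StrictMono φ ∧
      ((∀ i j l : Fin n, i < j → j < l →
          R * (a (φ j) - a (φ i)) ≤ a (φ l) - a (φ i)) ∨
       (∀ i j l : Fin n, i < j → j < l →
          R * (-(a (φ j.rev)) - (-(a (φ i.rev)))) ≤ -(a (φ l.rev)) - (-(a (φ i.rev))))) := by
  classical
  have hN0 : 0 < N := by
    calc 0 < 4 ^ ((⌈Real.logb 2 R⌉.toNat) * (n - 1) + 1) := by positivity
      _ ≤ N := hN
  set r : ℕ := (⌈Real.logb 2 R⌉).toNat with hr_def
  have hlogpos : 0 < Real.logb 2 R := Real.logb_pos (by norm_num) hR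
  have hr1 : 1 ≤ r := by
    have := Int.ceil_pos.mpr hlogpos
    omega
  set ℓ : ℕ := 2 ^ r with hℓ_def
  have hℓ2 : 2 ≤ ℓ := by
    calc 2 = 2 ^ 1 := by ring
      _ ≤ 2 ^ r := Nat.pow_le_pow_right (by omega) hr1
  have hRℓ : R ≤ (ℓ : ℝ) := by
    have hlog : Real.logb 2 R ≤ (r : ℝ) := by
      refine le_trans (Int.le_ceil _) ?_
      have := Int.self_le_toNat ⌈Real.logb 2 R⌉
      exact_mod_cast this
    have hR0 : (0 : ℝ) < R := by linarith
    calc R = (2 : ℝ) ^ (Real.logb 2 R) := (Real.rpow_logb (by norm_num) (by norm_num) hR0).symm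
      _ ≤ (2 : ℝ) ^ ((r : ℕ) : ℝ) := by
          exact Real.rpow_le_rpow_of_exponent_le (by norm_num) hlog
      _ = ((2 ^ r : ℕ) : ℝ) := by
          rw [Real.rpow_natCast]; push_cast; ring
  -- trivial case n = 1
  rcases Nat.lt_or_ge n 2 with hn2 | hn2
  · have hn1 : n = 1 := by omega
    subst hn1
    refine ⟨fun _ => ⟨0, hN0⟩, ?_, Or.inl ?_⟩
    · intro x y hxy
      exact absurd (Subsingleton.elim x y ▸ hxy) (lt_irrefl _)
    · intro i j l hij hjl
      exact absurd (Subsingleton.elim i j ▸ hij) (lt_irrefl _)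
  -- main case n ≥ 2
  set S : Finset ℝ := Finset.image a Finset.univ with hS_def
  have hScard : S.card = N := by
    rw [hS_def, Finset.card_image_of_injective _ ha.injective, Finset.card_univ,
      Fintype.card_fin]
  have hSd : ℓ ^ (2 * n - 3) ≤ S.card := by
    rw [hScard, hℓ_def, ← pow_mul]
    have hexp : r * (2 * n - 3) ≤ 2 * (r * (n - 1)) + 2 := by
      have h1 : 2 * n - 3 ≤ 2 * (n - 1) := by omega
      calc r * (2 * n - 3) ≤ r * (2 * (n - 1)) := Nat.mul_le_mul_left r h1
        _ = 2 * (r * (n - 1)) := by ring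
        _ ≤ 2 * (r * (n - 1)) + 2 := by omega
    calc 2 ^ (r * (2 * n - 3)) ≤ 2 ^ (2 * (r * (n - 1)) + 2) :=
          Nat.pow_le_pow_right (by omega) hexp
      _ = 4 ^ (r * (n - 1) + 1) := by
          rw [show (4:ℕ) = 2 ^ 2 by norm_num, ← pow_mul]
          ring_nf
      _ ≤ N := hN
  obtain ⟨p, q, hpq, hA, hB⟩ := mainLemma R hR.le ℓ hℓ2 hRℓ (2 * n - 3) S hSd
  have hmax : n - 1 ≤ p ∨ n - 1 ≤ q := by omega
  rcases hmax with hp | hq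
  · -- A-chain case
    obtain ⟨g, h1, h2, h3⟩ := achN_trunc hp hA
    have hmem : ∀ k : Fin n, ∃ t : Fin N, a t = g ↑k := by
      intro k
      have : g ↑k ∈ S := h1 ↑k (by omega)
      obtain ⟨t, _, ht⟩ := Finset.mem_image.mp this
      exact ⟨t, ht⟩
    choose t ht using hmem
    have htmono : StrictMono t := by
      intro k k' hkk'
      have hglt : g ↑k < g ↑k' := by
        refine chain_mono h2 ↑k ↑k' ?_ (by omega)
        exact_mod_cast hkk'
      have : a (t k) < a (t k') := by rw [ht k, ht k']; exact hglt
      exact ha.lt_iff_lt.mp this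
    refine ⟨t, htmono, Or.inl ?_⟩
    intro i j l hij hjl
    rw [ht i, ht j, ht l]
    refine suffLemma hR.le h2 h3 ↑i ↑j ↑l ?_ ?_ ?_
    · exact_mod_cast hij
    · exact_mod_cast hjl
    · omega
  · -- B-chain case
    obtain ⟨g, h1, h2, h3⟩ := achN_trunc hq hB
    have hmem : ∀ k : Fin n, ∃ t : Fin N, -(a t) = g ↑k := by
      intro k
      have : g ↑k ∈ S.image (fun x => -x) := h1 ↑k (by omega)
      obtain ⟨x, hxS, hx⟩ := Finset.mem_image.mp this
      obtain ⟨tt, _, htt⟩ := Finset.mem_image.mp hxS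
      exact ⟨tt, by rw [htt, hx]⟩
    choose t ht using hmem
    refine ⟨fun k => t k.rev, ?_, Or.inr ?_⟩
    · intro k k' hkk'
      have hrev : k'.rev < k.rev := Fin.rev_lt_rev.mpr hkk'
      have hglt : g ↑(k'.rev) < g ↑(k.rev) := by
        refine chain_mono h2 ↑(k'.rev) ↑(k.rev) ?_ (by omega)
        exact_mod_cast hrev
      have : a (t k.rev) < a (t k'.rev) := by
        have e1 := ht k.rev
        have e2 := ht k'.rev
        linarith
      exact ha.lt_iff_lt.mp this
    · intro i j l hij hjl
      simp only [Fin.rev_rev]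
      rw [ht i, ht j, ht l]
      refine suffLemma hR.le h2 h3 ↑i ↑j ↑l ?_ ?_ ?_
      · exact_mod_cast hij
      · exact_mod_cast hjl
      · omega
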